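/- Let 1/2 < θ < 1 and define f_θ(γ) = e^γ · ((e^γ + 1)/(e^γ − 1) · θ − 1/(e^γ − 1)) for γ > 0. Then f_θ attains a unique minimum on (0, ∞) at γ = log(1 + √((2θ−1)/θ)), and the minimum value equals (√θ + √(2θ−1))². -/

import Mathlib

open Real

theorem stmt6 (θ : ℝ) (hθ : 1 / 2 < θ) (hθ1 : θ < 1) :
    0 < Real.log (1 + Real.sqrt ((2 * θ - 1) / θ)) ∧
    (fun γ : ℝ => Real.exp γ *
        ((Real.exp γ + 1) / (Real.exp γ - 1) * θ - 1 / (Real.exp γ - 1)))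
        (Real.log (1 + Real.sqrt ((2 * θ - 1) / θ)))
      = (Real.sqrt θ + Real.sqrt (2 * θ - 1)) ^ 2 ∧
    ∀ γ : ℝ, 0 < γ → γ ≠ Real.log (1 + Real.sqrt ((2 * θ - 1) / θ)) →
      (Real.sqrt θ + Real.sqrt (2 * θ - 1)) ^ 2 <
        Real.exp γ * ((Real.exp γ + 1) / (Real.exp γ - 1) * θ - 1 / (Real.exp γ - 1)) := by
  have hθ0 : (0:ℝ) < θ := by linarith
  have h2θ : (0:ℝ) < 2 * θ - 1 := by linarith
  set a := Real.sqrt θ with ha'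
  set b := Real.sqrt (2 * θ - 1) with hb'
  have ha2 : a ^ 2 = θ := Real.sq_sqrt hθ0.le
  have hb2 : b ^ 2 = 2 * θ - 1 := Real.sq_sqrt h2θ.le
  have hapos : 0 < a := Real.sqrt_pos.mpr hθ0
  have hbpos : 0 < b := Real.sqrt_pos.mpr h2θ
  have hs : Real.sqrt ((2 * θ - 1) / θ) = b / a := Real.sqrt_div h2θ.le θ
  have hspos : 0 < b / a := div_pos hbpos hapos
  have h1s : (0:ℝ) < 1 + b / a := by linarith
  have hlog : 0 < Real.log (1 + Real.sqrt ((2 * θ - 1) / θ)) := by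
    rw [hs]; exact Real.log_pos (by linarith)
  refine ⟨hlog, ?_, ?_⟩
  · simp only [hs]
    rw [Real.exp_log h1s]
    have hane : a ≠ 0 := ne_of_gt hapos
    have hbne : b ≠ 0 := ne_of_gt hbpos
    field_simp
    rw [show a + b - a = b by ring, div_eq_iff hbne]
    linear_combination (-b) * ha2 + (-a) * hb2
  · intro γ hγ hne
    have hx1 : 1 < Real.exp γ := by
      rw [show (1:ℝ) = Real.exp 0 by simp]; exact Real.exp_lt_exp.mpr hγ
    set x := Real.exp γ with hx'
    have hu : 0 < x - 1 := by linarith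
    have hkey : a * (x - 1) ≠ b := by
      intro h
      apply hne
      have : x = 1 + b / a := by field_simp [ne_of_gt hapos] at h ⊢; linarith
      rw [hs, ← this, hx']
      exact (Real.log_exp γ).symm
    have hne0 : a * (x - 1) - b ≠ 0 := sub_ne_zero.mpr hkey
    have hsq : 0 < (a * (x - 1) - b) ^ 2 := lt_of_le_of_ne (sq_nonneg _) (Ne.symm (pow_ne_zero 2 hne0))
    have heq : x * ((x + 1) / (x - 1) * θ - 1 / (x - 1)) = (x * ((x + 1) * θ - 1)) / (x - 1) := by
      field_simp
    rw [heq, lt_div_iff₀ hu]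
    have hid : x * ((x + 1) * θ - 1) - (a + b) ^ 2 * (x - 1) = (a * (x - 1) - b) ^ 2 := by
      linear_combination (-x * (x - 1)) * ha2 + (-x) * hb2
    linarith [hsq]
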